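/- Let H : [t₀,∞) → ℝ be C¹, nonincreasing, with H(t) ≥ E∞ for all t, and suppose there exist C > 0 and ρ ∈ (0, 1/2) such that H'(t) + C(H(t) - E∞)^{2(1-ρ)} ≤ 0 for all t ≥ t₀. Then there exists a constant C' > 0 such that H(t) - E∞ ≤ C'(1+t)^{-1/(1-2ρ)} for all t ≥ t₀. -/
import Mathlib


set_option maxHeartbeats 1000000 in
/-- If `H` is C¹, nonincreasing, `H ≥ Einf`, and
`H'(t) + C(H(t)-Einf)^{2(1-ρ)} ≤ 0` with `ρ ∈ (0,1/2)`, then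
`H(t) - Einf ≤ C'(1+t)^{-1/(1-2ρ)}` for all `t ≥ t₀`. -/
theorem stmt8 (t₀ : ℝ) (ht₀ : 0 ≤ t₀) (H : ℝ → ℝ) (H' : ℝ → ℝ)
    (hH : ∀ t ≥ t₀, HasDerivAt H (H' t) t)
    (hmono : AntitoneOn H (Set.Ici t₀))
    (Einf : ℝ) (hlow : ∀ t ≥ t₀, Einf ≤ H t)
    (C : ℝ) (hC : 0 < C) (ρ : ℝ) (hρ : ρ ∈ Set.Ioo (0:ℝ) (1/2))
    (hineq : ∀ t ≥ t₀, H' t + C * (H t - Einf) ^ (2 * (1 - ρ)) ≤ 0) :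
    ∃ C' > (0:ℝ), ∀ t ≥ t₀, H t - Einf ≤ C' * (1 + t) ^ (-(1 / (1 - 2 * ρ))) := by
  obtain ⟨hρ0, hρ2⟩ := hρ
  set β : ℝ := 1 - 2 * ρ with hβ
  have hβ0 : 0 < β := by rw [hβ]; linarith
  set G : ℝ → ℝ := fun t => H t - Einf with hGdef
  have hGt₀ : 0 ≤ G t₀ := sub_nonneg.2 (hlow t₀ le_rfl)
  set M : ℝ := (1 + t₀) * (G t₀) ^ β + 1 / (β * C) with hMdef
  have hM0 : 0 < M := by
    have h1 : 0 ≤ (G t₀) ^ β := Real.rpow_nonneg hGt₀ _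
    have h2 : 0 < 1 / (β * C) := by positivity
    rw [hMdef]
    nlinarith
  clear_value β M
  refine ⟨M ^ (1/β), Real.rpow_pos_of_pos hM0 _, ?_⟩
  intro t ht
  have h1t : (0:ℝ) < 1 + t := by linarith
  have hGt : 0 ≤ G t := sub_nonneg.2 (hlow t ht)
  have hRHS : 0 ≤ M ^ (1/β) * (1 + t) ^ (-(1/β)) := by
    have := Real.rpow_pos_of_pos hM0 (1/β)
    have := Real.rpow_pos_of_pos h1t (-(1/β))
    positivity
  rcases eq_or_lt_of_le hGt with h0 | h0
  · calc G t = 0 := h0.symm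
      _ ≤ _ := hRHS
  -- main case: G t > 0
  have hGpos : ∀ s ∈ Set.Icc t₀ t, 0 < G s := by
    intro s hs
    have : H t ≤ H s := hmono hs.1 (Set.mem_Ici.2 ht) hs.2
    have : G t ≤ G s := by simp only [hGdef]; linarith
    linarith
  have hexp : 2 * (1 - ρ) = 1 + β := by rw [hβ]; ring
  -- derivative of ψ = G ^ (-β)
  have hderiv : ∀ s ∈ Set.Icc t₀ t,
      HasDerivAt (fun u => G u ^ (-β)) (H' s * (-β) * G s ^ (-β - 1)) s := by
    intro s hs
    have h1 : HasDerivAt (fun u => H u - Einf) (H' s) s := (hH s hs.1).sub_const _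
    exact h1.rpow_const (Or.inl (hGpos s hs).ne')
  -- slope bound
  have hslope : β * C * (t - t₀) ≤ G t ^ (-β) - G t₀ ^ (-β) := by
    have hconv : Convex ℝ (Set.Icc t₀ t) := convex_Icc _ _
    have hcont : ContinuousOn (fun u => G u ^ (-β)) (Set.Icc t₀ t) := fun s hs =>
      (hderiv s hs).continuousAt.continuousWithinAt
    have hint : interior (Set.Icc t₀ t) ⊆ Set.Icc t₀ t := interior_subset
    have hdiff : DifferentiableOn ℝ (fun u => G u ^ (-β)) (interior (Set.Icc t₀ t)) :=
      fun s hs => (hderiv s (hint hs)).differentiableAt.differentiableWithinAt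
    have hbound : ∀ x ∈ interior (Set.Icc t₀ t), β * C ≤ deriv (fun u => G u ^ (-β)) x := by
      intro x hx
      rw [(hderiv x (hint hx)).deriv]
      have hxmem := hint hx
      have hGx : 0 < G x := hGpos x hxmem
      have hx1 : C * G x ^ (1 + β) ≤ -H' x := by
        have h := hineq x hxmem.1
        rw [hexp] at h
        simp only [hGdef] at *
        linarith
      have hpow : G x ^ (1 + β) * G x ^ (-β - 1) = 1 := by
        rw [← Real.rpow_add hGx]
        have : 1 + β + (-β - 1) = (0:ℝ) := by ring
        rw [this, Real.rpow_zero]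
      have h2 : 0 < G x ^ (-β - 1) := Real.rpow_pos_of_pos hGx _
      have h3 : C * G x ^ (1 + β) * G x ^ (-β - 1) ≤ -H' x * G x ^ (-β - 1) :=
        mul_le_mul_of_nonneg_right hx1 h2.le
      have h4 : C ≤ -H' x * G x ^ (-β - 1) := by
        calc C = C * (G x ^ (1 + β) * G x ^ (-β - 1)) := by rw [hpow]; ring
          _ ≤ -H' x * G x ^ (-β - 1) := by linarith [h3]
      nlinarith
    have := hconv.mul_sub_le_image_sub_of_le_deriv hcont hdiff hbound t₀
      (Set.left_mem_Icc.2 (le_trans le_rfl ht)) t (Set.right_mem_Icc.2 ht) ht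
    linarith
  -- key algebraic inequality
  have hGt₀pos : 0 < G t₀ := hGpos t₀ (Set.left_mem_Icc.2 ht)
  have hψt : G t ^ (-β) = (G t ^ β)⁻¹ := by
    rw [Real.rpow_neg hGt]
  have hψt₀ : G t₀ ^ (-β) = (G t₀ ^ β)⁻¹ := Real.rpow_neg hGt₀pos.le _
  have hGtβ : 0 < G t ^ β := Real.rpow_pos_of_pos h0 _
  have hGt₀β : 0 < G t₀ ^ β := Real.rpow_pos_of_pos hGt₀pos _
  -- ψ t ≥ (G t₀ ^ β)⁻¹ + βC(t-t₀)
  have hψ : (G t₀ ^ β)⁻¹ + β * C * (t - t₀) ≤ (G t ^ β)⁻¹ := by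
    rw [← hψt, ← hψt₀]; linarith
  have hden : 0 < (G t₀ ^ β)⁻¹ + β * C * (t - t₀) := by
    have : 0 ≤ β * C * (t - t₀) := by
      have : 0 ≤ t - t₀ := by linarith
      positivity
    positivity
  -- key : G t ^ β * (1 + t) ≤ M
  have hkey : G t ^ β * (1 + t) ≤ M := by
    have h5 : G t ^ β ≤ ((G t₀ ^ β)⁻¹ + β * C * (t - t₀))⁻¹ := by
      rw [← inv_inv (G t ^ β)]
      exact inv_anti₀ hden hψ
    have h6 : 1 + t ≤ M * ((G t₀ ^ β)⁻¹ + β * C * (t - t₀)) := by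
      have e1 : M * (G t₀ ^ β)⁻¹ ≥ 1 + t₀ := by
        rw [hMdef]
        have : ((1 + t₀) * G t₀ ^ β + 1 / (β * C)) * (G t₀ ^ β)⁻¹
            = (1 + t₀) * (G t₀ ^ β * (G t₀ ^ β)⁻¹) + (1 / (β * C)) * (G t₀ ^ β)⁻¹ := by ring
        rw [this, mul_inv_cancel₀ hGt₀β.ne']
        have : 0 ≤ (1 / (β * C)) * (G t₀ ^ β)⁻¹ := by positivity
        linarith
      have e2 : M * (β * C * (t - t₀)) ≥ t - t₀ := by
        have hbc : 0 < β * C := by positivity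
        have hMb : 1 ≤ M * (β * C) := by
          have e : M * (β * C) = (1 + t₀) * G t₀ ^ β * (β * C) + 1 := by
            rw [hMdef]; field_simp
          have h1 : 0 ≤ (1 + t₀) * G t₀ ^ β := by positivity
          nlinarith [mul_nonneg h1 hbc.le]
        have htt : 0 ≤ t - t₀ := by linarith
        nlinarith [mul_le_mul_of_nonneg_right hMb htt]
      linarith [e1, e2, mul_add M ((G t₀ ^ β)⁻¹) (β * C * (t - t₀))]
    calc G t ^ β * (1 + t) ≤ ((G t₀ ^ β)⁻¹ + β * C * (t - t₀))⁻¹ * (1 + t) :=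
          mul_le_mul_of_nonneg_right h5 h1t.le
      _ ≤ M := by
          rw [inv_mul_le_iff₀ hden]
          nlinarith [h6, mul_comm M ((G t₀ ^ β)⁻¹ + β * C * (t - t₀))]
  -- conclude
  have hfinal : G t ≤ M ^ (1/β) * (1 + t) ^ (-(1/β)) := by
    have h7 : G t ^ β ≤ M / (1 + t) := by
      rw [le_div_iff₀ h1t]; exact hkey
    have h8 : (G t ^ β) ^ (1/β) ≤ (M / (1 + t)) ^ (1/β) :=
      Real.rpow_le_rpow (Real.rpow_nonneg hGt _) h7 (by positivity)
    have h9 : (G t ^ β) ^ (1/β) = G t := by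
      rw [← Real.rpow_mul hGt]
      rw [mul_one_div_cancel hβ0.ne', Real.rpow_one]
    have h10 : (M / (1 + t)) ^ (1/β) = M ^ (1/β) * (1 + t) ^ (-(1/β)) := by
      rw [Real.div_rpow hM0.le h1t.le, Real.rpow_neg h1t.le, div_eq_mul_inv]
    rw [← h9, ← h10]; exact h8
  exact hfinal
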